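/- Let F be a free group on generators x₁, …, x_M, let ε : ℚ[F] → ℚ be the augmentation map, and let I = ker ε. Then for every n ≥ 0 the quotient Iⁿ/I^{n+1} is isomorphic as a ℚ-vector space to the n-th tensor power H^{⊗n} of H = ℚ^M, via the map sending the class of (x_{i₁}−1)(x_{i₂}−1)⋯(x_{iₙ}−1) to e_{i₁} ⊗ ⋯ ⊗ e_{iₙ}. -/

import Mathlib

open MonoidAlgebra
open scoped TensorProduct Pointwise

namespace Stmt15

variable (M n : ℕ)

local notation "G" => FreeGroup (Fin M)
local notation "R" => MonoidAlgebra ℚ (FreeGroup (Fin M))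
local notation "H" => (Fin M → ℚ)

/-- `x_i - 1`. -/
noncomputable def X (i : Fin M) : R := of ℚ (FreeGroup (Fin M)) (FreeGroup.of i) - 1

lemma X_eq (i : Fin M) : X M i = of ℚ (FreeGroup (Fin M)) (FreeGroup.of i : FreeGroup (Fin M)) - 1 := rfl

/-- linear map `H → R`, `w ↦ ∑ wᵢ (xᵢ - 1)`. -/
noncomputable def L : H →ₗ[ℚ] R :=
  ∑ i : Fin M, (LinearMap.proj i : H →ₗ[ℚ] ℚ).smulRight (X M i)

lemma L_apply (w : H) : L M w = ∑ i : Fin M, w i • X M i := by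
  simp [L, LinearMap.sum_apply]

/-- words of length at most `n` -/
abbrev Wd := {l : List (Fin M) // l.length ≤ n}

/-- free module on words of length ≤ n -/
abbrev V := Wd M n →₀ ℚ

/-- prepend-a-letter operator, truncating at degree `n` -/
noncomputable def ρ (i : Fin M) : Module.End ℚ (V M n) :=
  Finsupp.lsum ℚ fun l => LinearMap.toSpanSingleton ℚ (V M n)
    (if h : l.1.length < n then Finsupp.single ⟨i :: l.1, h⟩ (1:ℚ) else 0)

lemma ρ_single (i : Fin M) (l : Wd M n) (c : ℚ) :
    ρ M n i (Finsupp.single l c) =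
      if h : l.1.length < n then Finsupp.single ⟨i :: l.1, h⟩ c else 0 := by
  rw [ρ, Finsupp.lsum_single, LinearMap.toSpanSingleton_apply]
  split_ifs <;> simp [Finsupp.smul_single]

/-- filtration by word length -/
noncomputable def W (j : ℕ) : Submodule ℚ (V M n) where
  carrier := {f | ∀ l : Wd M n, l.1.length < j → f l = 0}
  add_mem' := by intro a b ha hb l hl; simp [ha l hl, hb l hl]
  zero_mem' := by intro l _; simp
  smul_mem' := by intro c a ha l hl; simp [ha l hl]

lemma mem_W {j : ℕ} {v : V M n} : v ∈ W M n j ↔ ∀ l : Wd M n, l.1.length < j → v l = 0 :=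
  Iff.rfl

lemma W_antitone {j k : ℕ} (h : j ≤ k) : W M n k ≤ W M n j := by
  intro v hv l hl; exact hv l (lt_of_lt_of_le hl h)

lemma W_zero : (⊤ : Submodule ℚ (V M n)) ≤ W M n 0 := by
  intro v _ l hl; omega

lemma W_top : W M n (n+1) = ⊥ := by
  apply le_antisymm _ bot_le
  intro v hv
  simp only [Submodule.mem_bot]
  ext l
  exact hv l (by omega)

lemma single_mem_W {j : ℕ} (l : Wd M n) (c : ℚ) (h : j ≤ l.1.length) :
    Finsupp.single l c ∈ W M n j := by
  intro l' hl'
  rw [Finsupp.single_apply]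
  rw [if_neg]
  rintro rfl; omega

lemma ρ_raise (i : Fin M) {j : ℕ} {v : V M n} (hv : v ∈ W M n j) :
    ρ M n i v ∈ W M n (j+1) := by
  classical
  have hv' : v = ∑ l ∈ v.support, Finsupp.single l (v l) :=
    (Finsupp.sum_single v).symm
  rw [hv', map_sum]
  apply Submodule.sum_mem
  intro l hl
  rw [ρ_single]
  split_ifs with h
  · apply single_mem_W
    have : ¬ (l.1.length < j) := fun hc => (Finsupp.mem_support_iff.mp hl) (hv l hc)
    simp only [List.length_cons]
    omega
  · exact Submodule.zero_mem _

lemma end_pow_W {f : Module.End ℚ (V M n)}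
    (hf : ∀ j (v : V M n), v ∈ W M n j → f v ∈ W M n (j+1)) :
    ∀ (k j : ℕ) (v : V M n), v ∈ W M n j → (f^k) v ∈ W M n (j+k)
  | 0, j, v, hv => hv
  | (k+1), j, v, hv => by
    rw [pow_succ, Module.End.mul_apply]
    have := end_pow_W hf k (j+1) (f v) (hf j v hv)
    convert this using 2
    omega

lemma raise_pow_zero {f : Module.End ℚ (V M n)}
    (hf : ∀ j (v : V M n), v ∈ W M n j → f v ∈ W M n (j+1)) : f ^ (n+1) = 0 := by
  apply LinearMap.ext; intro v
  have : (f^(n+1)) v ∈ W M n (0 + (n+1)) :=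
    end_pow_W M n hf (n+1) 0 v (W_zero M n trivial)
  rw [Nat.zero_add, W_top, Submodule.mem_bot] at this
  simpa using this

lemma neg_ρ_pow (i : Fin M) : (-ρ M n i) ^ (n+1) = 0 := by
  apply raise_pow_zero
  intro j v hv
  rw [LinearMap.neg_apply]
  exact Submodule.neg_mem _ (ρ_raise M n i hv)

/-- the invertible image of the generator `xᵢ` -/
noncomputable def u (i : Fin M) : (Module.End ℚ (V M n))ˣ where
  val := 1 + ρ M n i
  inv := ∑ k ∈ Finset.range (n+1), (-ρ M n i)^k
  val_inv := by
    set x := ρ M n i with hx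
    set S := ∑ k ∈ Finset.range (n+1), (-x)^k with hS
    have h : (-x - 1) * S = -1 := by
      have h0 := mul_geom_sum (-x) (n+1)
      rw [neg_ρ_pow] at h0
      rw [hS, h0]; abel
    have hh : -(x * S) - S = -1 := by
      have e : (-x - 1) * S = -(x*S) - S := by apply LinearMap.ext; intro v; simp [sub_mul]
      rw [e] at h; exact h
    calc (1 + x) * S = S + x*S := by rw [add_mul, one_mul]
    _ = -(-(x*S) - S) := by abel
    _ = -(-1) := by rw [hh]
    _ = 1 := neg_neg 1
  inv_val := by
    set x := ρ M n i with hx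
    set S := ∑ k ∈ Finset.range (n+1), (-x)^k with hS
    have h : S * (-x - 1) = -1 := by
      have h0 := geom_sum_mul (-x) (n+1)
      rw [neg_ρ_pow] at h0
      rw [hS, h0]; abel
    have hh : -(S * x) - S = -1 := by
      have e : S * (-x - 1) = -(S*x) - S := by apply LinearMap.ext; intro v; simp [mul_sub]
      rw [e] at h; exact h
    calc S * (1 + x) = S + S*x := by rw [mul_add, mul_one]
    _ = -(-(S*x) - S) := by abel
    _ = -(-1) := by rw [hh]
    _ = 1 := neg_neg 1

/-- the Magnus representation -/
noncomputable def Φ : R →ₐ[ℚ] Module.End ℚ (V M n) :=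
  MonoidAlgebra.lift ℚ _ (FreeGroup (Fin M))
    ((Units.coeHom _).comp (FreeGroup.lift (u M n)))

lemma Φ_of (g : FreeGroup (Fin M)) :
    Φ M n (of ℚ (FreeGroup (Fin M)) g) = (FreeGroup.lift (u M n) g : Module.End ℚ (V M n)) := by
  rw [Φ, MonoidAlgebra.lift_of]; rfl

lemma Φ_of_gen (i : Fin M) :
    Φ M n (of ℚ (FreeGroup (Fin M)) (FreeGroup.of i : FreeGroup (Fin M))) = 1 + ρ M n i := by
  rw [Φ_of, FreeGroup.lift_apply_of]; rfl

lemma Φ_of_gen_inv (i : Fin M) :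
    Φ M n (of ℚ (FreeGroup (Fin M)) (FreeGroup.of i : FreeGroup (Fin M))⁻¹)
      = ∑ k ∈ Finset.range (n+1), (-ρ M n i)^k := by
  rw [Φ_of, map_inv, FreeGroup.lift_apply_of]; rfl

lemma Φ_X (i : Fin M) : Φ M n (X M i) = ρ M n i := by
  rw [X_eq, map_sub, map_one, Φ_of_gen]; noncomm_ring


/-- operators shifting the filtration by `m` -/
noncomputable def ShiftSet (m : ℕ) : Submodule ℚ R where
  carrier := {x | ∀ (j : ℕ) (v : V M n), v ∈ W M n j → Φ M n x v ∈ W M n (j+m)}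
  add_mem' := by
    intro a b ha hb j v hv
    rw [map_add, LinearMap.add_apply]
    exact Submodule.add_mem _ (ha j v hv) (hb j v hv)
  zero_mem' := by intro j v hv; rw [map_zero]; exact Submodule.zero_mem _
  smul_mem' := by
    intro c a ha j v hv
    rw [map_smul, LinearMap.smul_apply]
    exact Submodule.smul_mem _ _ (ha j v hv)

lemma mem_ShiftSet {m : ℕ} {x : R} :
    x ∈ ShiftSet M n m ↔ ∀ (j : ℕ) (v : V M n), v ∈ W M n j → Φ M n x v ∈ W M n (j+m) :=
  Iff.rfl

lemma of_mem_ShiftSet_zero (g : FreeGroup (Fin M)) :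
    of ℚ (FreeGroup (Fin M)) g ∈ ShiftSet M n 0 := by
  induction g using FreeGroup.induction_on with
  | C1 =>
    intro j v hv
    rw [map_one]
    simpa using hv
  | of i =>
    intro j v hv
    rw [Φ_of_gen, LinearMap.add_apply, Module.End.one_apply]
    exact Submodule.add_mem _ (by simpa using hv)
      (W_antitone M n (by omega) (ρ_raise M n i hv))
  | inv_of i _ =>
    intro j v hv
    rw [Φ_of_gen_inv, LinearMap.sum_apply]
    apply Submodule.sum_mem
    intro k _
    exact W_antitone M n (by omega)
      (end_pow_W M n (fun j v hv => by
        rw [LinearMap.neg_apply]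
        exact Submodule.neg_mem _ (ρ_raise M n i hv)) k j v hv)
  | mul g h hg hh =>
    intro j v hv
    rw [map_mul, map_mul, Module.End.mul_apply]
    exact hg j _ (hh j v hv)

lemma shiftSet_zero_top : ShiftSet M n 0 = ⊤ := by
  rw [eq_top_iff]
  intro x hx
  clear hx
  induction x using MonoidAlgebra.induction_on with
  | of g => exact of_mem_ShiftSet_zero M n g
  | add a b ha hb => exact Submodule.add_mem _ ha hb
  | smul c a ha => exact Submodule.smul_mem _ _ ha

lemma of_sub_one_mem_ShiftSet_one (g : FreeGroup (Fin M)) :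
    of ℚ (FreeGroup (Fin M)) g - 1 ∈ ShiftSet M n 1 := by
  induction g using FreeGroup.induction_on with
  | C1 => rw [map_one, sub_self]; exact Submodule.zero_mem _
  | of i =>
    intro j v hv
    rw [map_sub, map_one, LinearMap.sub_apply, Module.End.one_apply, Φ_of_gen,
      LinearMap.add_apply, Module.End.one_apply]
    have : v + ρ M n i v - v = ρ M n i v := by abel
    rw [this]
    exact ρ_raise M n i hv
  | inv_of i _ =>
    intro j v hv
    rw [map_sub, map_one, LinearMap.sub_apply, Module.End.one_apply, Φ_of_gen_inv,
      LinearMap.sum_apply]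
    rw [Finset.sum_range_succ']
    simp only [pow_zero, Module.End.one_apply]
    have : (∑ k ∈ Finset.range n, ((-ρ M n i) ^ (k+1)) v) + v - v
        = ∑ k ∈ Finset.range n, ((-ρ M n i) ^ (k+1)) v := by abel
    rw [this]
    apply Submodule.sum_mem
    intro k _
    have : ((-ρ M n i) ^ (k+1)) v ∈ W M n (j + (k+1)) :=
      end_pow_W M n (fun j v hv => by
        rw [LinearMap.neg_apply]
        exact Submodule.neg_mem _ (ρ_raise M n i hv)) (k+1) j v hv
    exact W_antitone M n (by omega) this
  | mul g h hg hh =>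
    have key : of ℚ (FreeGroup (Fin M)) (g * h) - 1
        = (of ℚ (FreeGroup (Fin M)) g - 1) * (of ℚ (FreeGroup (Fin M)) h - 1)
          + (of ℚ (FreeGroup (Fin M)) g - 1) + (of ℚ (FreeGroup (Fin M)) h - 1) := by
      rw [map_mul]; noncomm_ring
    rw [key]
    apply Submodule.add_mem _ (Submodule.add_mem _ _ hg) hh
    intro j v hv
    rw [map_mul, Module.End.mul_apply]
    exact W_antitone M n (by omega) (hg (j+1) _ (hh j v hv))

section Aug

variable (ε : MonoidAlgebra ℚ (FreeGroup (Fin M)) →ₐ[ℚ] ℚ)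
  (hε : ∀ g : FreeGroup (Fin M), ε (of ℚ (FreeGroup (Fin M)) g) = 1)

include hε in
lemma ker_le_span :
    LinearMap.ker ε.toLinearMap ≤
      Submodule.span ℚ (Set.range fun g : FreeGroup (Fin M) =>
        of ℚ (FreeGroup (Fin M)) g - 1) := by
  have key : ∀ x : R, x - ε x • 1 ∈ Submodule.span ℚ
      (Set.range fun g : FreeGroup (Fin M) => of ℚ (FreeGroup (Fin M)) g - 1) := by
    intro x
    induction x using MonoidAlgebra.induction_on with
    | of g =>
      rw [show (ε (of ℚ (FreeGroup (Fin M)) g)) = 1 from hε g, one_smul]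
      exact Submodule.subset_span ⟨g, rfl⟩
    | add a b ha hb =>
      have : a + b - ε (a+b) • 1 = (a - ε a • 1) + (b - ε b • 1) := by
        rw [map_add, add_smul]; abel
      rw [this]; exact Submodule.add_mem _ ha hb
    | smul c a ha =>
      have : c • a - ε (c • a) • 1 = c • (a - ε a • 1) := by
        rw [map_smul, smul_sub, smul_smul, smul_eq_mul]
      rw [this]; exact Submodule.smul_mem _ _ ha
  intro x hx
  have hx0 : ε x = 0 := hx
  have := key x
  rwa [hx0, zero_smul, sub_zero] at this

include hε in
lemma ker_le_ShiftSet_one : LinearMap.ker ε.toLinearMap ≤ ShiftSet M n 1 := by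
  refine le_trans (ker_le_span M ε hε) (Submodule.span_le.mpr ?_)
  rintro _ ⟨g, rfl⟩
  exact of_sub_one_mem_ShiftSet_one M n g

include hε in
lemma pow_ker_le_ShiftSet (m : ℕ) :
    (LinearMap.ker ε.toLinearMap) ^ m ≤ ShiftSet M n m := by
  induction m with
  | zero =>
    rw [pow_zero, shiftSet_zero_top]
    exact le_top
  | succ m ih =>
    rw [pow_succ]
    apply Submodule.mul_le.mpr
    intro a ha b hb
    intro j v hv
    rw [map_mul, Module.End.mul_apply]
    have h1 : Φ M n b v ∈ W M n (j+1) := ker_le_ShiftSet_one M n ε hε hb j v hv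
    have h2 := ih ha (j+1) _ h1
    have : j + 1 + m = j + (m+1) := by omega
    rwa [this] at h2

end Aug


/-- the vacuum vector -/
noncomputable def δ₀ : V M n := Finsupp.single ⟨[], Nat.zero_le n⟩ 1

lemma δ₀_mem_W0 : δ₀ M n ∈ W M n 0 := by intro l hl; omega

/-- word of a multi-index -/
def wd (i : Fin n → Fin M) : Wd M n := ⟨List.ofFn i, le_of_eq (List.length_ofFn (f := i))⟩

/-- basis tensors -/
noncomputable def tp (i : Fin n → Fin M) : ⨂[ℚ]^n (Fin M → ℚ) :=
  PiTensorProduct.tprod ℚ (fun s => Pi.single (i s) (1:ℚ))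

/-- extraction of the degree-`n` Magnus coefficients -/
noncomputable def Θt : R →ₗ[ℚ] ⨂[ℚ]^n (Fin M → ℚ) where
  toFun x := ∑ i : Fin n → Fin M, (Φ M n x (δ₀ M n)) (wd M n i) • tp M n i
  map_add' x y := by
    simp only [map_add, LinearMap.add_apply, Finsupp.add_apply, add_smul]
    rw [Finset.sum_add_distrib]
  map_smul' c x := by
    simp only [map_smul, LinearMap.smul_apply, Finsupp.smul_apply, RingHom.id_apply,
      Finset.smul_sum, smul_smul, smul_eq_mul]

lemma Θt_apply (x : R) :
    Θt M n x = ∑ i : Fin n → Fin M, (Φ M n x (δ₀ M n)) (wd M n i) • tp M n i := rfl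

section Aug2

variable (ε : MonoidAlgebra ℚ (FreeGroup (Fin M)) →ₐ[ℚ] ℚ)
  (hε : ∀ g : FreeGroup (Fin M), ε (of ℚ (FreeGroup (Fin M)) g) = 1)

include hε in
lemma Θt_vanish {x : R} (hx : x ∈ (LinearMap.ker ε.toLinearMap) ^ (n+1)) :
    Θt M n x = 0 := by
  have h1 : Φ M n x (δ₀ M n) ∈ W M n (0 + (n+1)) :=
    pow_ker_le_ShiftSet M n ε hε (n+1) hx 0 _ (δ₀_mem_W0 M n)
  rw [Nat.zero_add, W_top, Submodule.mem_bot] at h1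
  rw [Θt_apply, h1]
  simp

end Aug2

lemma Φ_L (w : Fin M → ℚ) : Φ M n (L M w) = ∑ i : Fin M, w i • ρ M n i := by
  rw [L_apply, map_sum]
  congr 1
  funext i
  rw [map_smul, Φ_X]

lemma Φ_L_single (w : Fin M → ℚ) (l : Wd M n) (hl : l.1.length < n) :
    Φ M n (L M w) (Finsupp.single l 1)
      = ∑ j : Fin M, w j • Finsupp.single (⟨j :: l.1, hl⟩ : Wd M n) 1 := by
  rw [Φ_L, LinearMap.sum_apply]
  congr 1
  funext j
  rw [LinearMap.smul_apply, ρ_single, dif_pos hl]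

lemma comp_delta : ∀ (m : ℕ) (hm : m ≤ n) (v : Fin m → (Fin M → ℚ)),
    ((List.ofFn fun s => Φ M n (L M (v s))).prod) (δ₀ M n)
      = ∑ i : Fin m → Fin M, (∏ s, v s (i s)) •
          Finsupp.single (⟨List.ofFn i, le_trans (le_of_eq (List.length_ofFn (f := i))) hm⟩ : Wd M n) 1 := by
  intro m
  induction m with
  | zero =>
    intro hm v
    rw [show (List.ofFn fun s : Fin 0 => Φ M n (L M (v s))) = [] from List.ofFn_zero]
    rw [List.prod_nil, Module.End.one_apply]
    rw [Fintype.sum_unique]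
    simp [δ₀]
  | succ m ih =>
    intro hm v
    rw [List.ofFn_succ, List.prod_cons, Module.End.mul_apply,
      ih (by omega) (fun s => v s.succ), map_sum]
    have hstep : ∀ i : Fin m → Fin M,
        Φ M n (L M (v 0)) ((∏ s, v s.succ (i s)) •
          Finsupp.single (⟨List.ofFn i, le_trans (le_of_eq (List.length_ofFn (f := i))) (by omega)⟩ : Wd M n) 1)
        = ∑ j : Fin M, ((v 0 j) * ∏ s, v s.succ (i s)) •
            Finsupp.single (⟨j :: List.ofFn i, by
              simp only [List.length_cons, List.length_ofFn]; omega⟩ : Wd M n) 1 := by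
      intro i
      rw [map_smul, Φ_L_single M n (v 0) _ (by simp only [List.length_ofFn]; omega)]
      rw [Finset.smul_sum]
      congr 1
      funext j
      rw [smul_smul, mul_comm]
    rw [Finset.sum_congr rfl (fun i _ => hstep i)]
    rw [← Fintype.sum_prod_type']
    apply Fintype.sum_equiv
      ((Equiv.prodComm (Fin m → Fin M) (Fin M)).trans (Fin.consEquiv (fun _ : Fin (m+1) => Fin M)))
    intro x
    obtain ⟨i', j⟩ := x
    have he : ((Equiv.prodComm (Fin m → Fin M) (Fin M)).trans
        (Fin.consEquiv (fun _ : Fin (m+1) => Fin M))) (i', j) = Fin.cons j i' := rfl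
    rw [he]
    have hprod : (∏ s : Fin (m+1), v s ((Fin.cons j i' : Fin (m+1) → Fin M) s))
        = v 0 j * ∏ s : Fin m, v s.succ (i' s) := by
      rw [Fin.prod_univ_succ]
      simp [Fin.cons_zero, Fin.cons_succ]
    have hlist : List.ofFn (Fin.cons j i' : Fin (m+1) → Fin M) = j :: List.ofFn i' := by
      rw [List.ofFn_succ]
      simp [Fin.cons_zero, Fin.cons_succ]
    rw [hprod]
    congr 1
    apply Finsupp.single_left_inj (by norm_num) |>.mpr
    exact Subtype.ext hlist.symm

/-- product of the images of vectors -/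
noncomputable def P (v : Fin n → (Fin M → ℚ)) : R := (List.ofFn fun s => L M (v s)).prod

lemma list_prod_mem_pow (K : Submodule ℚ R) :
    ∀ l : List R, (∀ a ∈ l, a ∈ K) → l.prod ∈ K ^ l.length := by
  intro l
  induction l with
  | nil =>
    intro _
    rw [List.prod_nil, List.length_nil, pow_zero]
    exact Submodule.mem_one.mpr ⟨1, map_one _⟩
  | cons a l ih =>
    intro h
    rw [List.prod_cons, List.length_cons, pow_succ']
    exact Submodule.mul_mem_mul (h a (by simp)) (ih (fun b hb => h b (by simp [hb])))

lemma prod_ofFn_update_add : ∀ (m : ℕ) (f : Fin m → R) (s : Fin m) (a b : R),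
    (List.ofFn (Function.update f s (a+b))).prod
      = (List.ofFn (Function.update f s a)).prod + (List.ofFn (Function.update f s b)).prod := by
  intro m
  induction m with
  | zero => intro f s; exact s.elim0
  | succ m ih =>
    intro f s a b
    induction s using Fin.cases with
    | zero =>
      have htail : ∀ x : R, (fun j : Fin m => Function.update f 0 x j.succ) = fun j => f j.succ := by
        intro x; funext j; exact Function.update_of_ne (Fin.succ_ne_zero j) _ _
      simp only [List.ofFn_succ, List.prod_cons, Function.update_self, htail]
      rw [add_mul]
    | succ s' =>
      have hhead : ∀ x : R, Function.update f s'.succ x 0 = f 0 := by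
        intro x; exact Function.update_of_ne (Fin.succ_ne_zero s').symm _ _
      have htail : ∀ x : R, (fun j : Fin m => Function.update f s'.succ x j.succ)
          = Function.update (fun j : Fin m => f j.succ) s' x := by
        intro x; funext j
        by_cases hj : j = s'
        · subst hj; rw [Function.update_self, Function.update_self]
        · rw [Function.update_of_ne hj, Function.update_of_ne (fun hc => hj (Fin.succ_injective _ hc))]
      simp only [List.ofFn_succ, List.prod_cons, hhead, htail]
      rw [ih, mul_add]

lemma prod_ofFn_update_smul : ∀ (m : ℕ) (f : Fin m → R) (s : Fin m) (c : ℚ) (a : R),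
    (List.ofFn (Function.update f s (c • a))).prod
      = c • (List.ofFn (Function.update f s a)).prod := by
  intro m
  induction m with
  | zero => intro f s; exact s.elim0
  | succ m ih =>
    intro f s c a
    induction s using Fin.cases with
    | zero =>
      have htail : ∀ x : R, (fun j : Fin m => Function.update f 0 x j.succ) = fun j => f j.succ := by
        intro x; funext j; exact Function.update_of_ne (Fin.succ_ne_zero j) _ _
      simp only [List.ofFn_succ, List.prod_cons, Function.update_self, htail]
      rw [smul_mul_assoc]
    | succ s' =>
      have hhead : ∀ x : R, Function.update f s'.succ x 0 = f 0 := by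
        intro x; exact Function.update_of_ne (Fin.succ_ne_zero s').symm _ _
      have htail : ∀ x : R, (fun j : Fin m => Function.update f s'.succ x j.succ)
          = Function.update (fun j : Fin m => f j.succ) s' x := by
        intro x; funext j
        by_cases hj : j = s'
        · subst hj; rw [Function.update_self, Function.update_self]
        · rw [Function.update_of_ne hj, Function.update_of_ne (fun hc => hj (Fin.succ_injective _ hc))]
      simp only [List.ofFn_succ, List.prod_cons, hhead, htail]
      rw [ih, mul_smul_comm]

lemma ofFn_L_update (v : Fin n → (Fin M → ℚ)) (s : Fin n) (x : Fin M → ℚ) :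
    (List.ofFn fun t => L M (Function.update v s x t))
      = List.ofFn (Function.update (fun t => L M (v t)) s (L M x)) := by
  congr 1
  funext t
  by_cases ht : t = s
  · subst ht; rw [Function.update_self, Function.update_self]
  · rw [Function.update_of_ne ht, Function.update_of_ne ht]

lemma P_update_add (v : Fin n → (Fin M → ℚ)) (s : Fin n) (x y : Fin M → ℚ) :
    P M n (Function.update v s (x + y))
      = P M n (Function.update v s x) + P M n (Function.update v s y) := by
  unfold P
  rw [ofFn_L_update, ofFn_L_update, ofFn_L_update, map_add, prod_ofFn_update_add]

lemma P_update_smul (v : Fin n → (Fin M → ℚ)) (s : Fin n) (c : ℚ) (x : Fin M → ℚ) :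
    P M n (Function.update v s (c • x)) = c • P M n (Function.update v s x) := by
  unfold P
  rw [ofFn_L_update, ofFn_L_update, map_smul, prod_ofFn_update_smul]

lemma Φ_P_delta (v : Fin n → (Fin M → ℚ)) :
    Φ M n (P M n v) (δ₀ M n)
      = ∑ i : Fin n → Fin M, (∏ s, v s (i s)) • Finsupp.single (wd M n i) 1 := by
  have h1 : Φ M n (P M n v) = ((List.ofFn fun s => L M (v s)).map (Φ M n)).prod :=
    map_list_prod (Φ M n) _
  rw [h1, List.map_ofFn]
  have := comp_delta M n n le_rfl v
  rw [show ((List.ofFn ((Φ M n) ∘ fun s => L M (v s))).prod) (δ₀ M n)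
      = ((List.ofFn (fun s => Φ M n (L M (v s)))).prod) (δ₀ M n) from rfl, this]
  rfl

lemma wd_injective : Function.Injective (wd M n) := by
  intro a b hab
  exact List.ofFn_injective (congrArg Subtype.val hab)

lemma Θt_P (v : Fin n → (Fin M → ℚ)) :
    Θt M n (P M n v) = PiTensorProduct.tprod ℚ v := by
  classical
  rw [Θt_apply]
  have hcoeff : ∀ i : Fin n → Fin M,
      (Φ M n (P M n v) (δ₀ M n)) (wd M n i) = ∏ s, v s (i s) := by
    intro i
    rw [Φ_P_delta]
    rw [Finsupp.finset_sum_apply]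
    rw [Finset.sum_eq_single i]
    · rw [Finsupp.smul_apply, Finsupp.single_apply, if_pos rfl, smul_eq_mul, mul_one]
    · intro b _ hb
      rw [Finsupp.smul_apply, Finsupp.single_apply, if_neg (fun hc => hb (wd_injective M n hc))]
      simp
    · intro hi; exact absurd (Finset.mem_univ i) hi
  rw [Finset.sum_congr rfl (fun i _ => by rw [hcoeff i])]
  have hv : ∀ s : Fin n, v s = ∑ j : Fin M, v s j • (Pi.single j (1:ℚ) : Fin M → ℚ) := by
    intro s
    funext k
    rw [Finset.sum_apply]
    simp [Pi.single_apply]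
  have := MultilinearMap.map_sum (PiTensorProduct.tprod ℚ
    (s := fun _ : Fin n => (Fin M → ℚ))) (g := fun s j => v s j • (Pi.single j (1:ℚ) : Fin M → ℚ))
  rw [show PiTensorProduct.tprod ℚ v = PiTensorProduct.tprod ℚ
    (fun s => ∑ j : Fin M, v s j • (Pi.single j (1:ℚ) : Fin M → ℚ)) from congrArg _ (funext hv)]
  rw [this]
  congr 1
  funext r
  rw [MultilinearMap.map_smul_univ]
  rfl

lemma L_single (i : Fin M) : L M (Pi.single i (1:ℚ)) = X M i := by
  rw [L_apply, Finset.sum_eq_single i]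
  · simp
  · intro j _ hj
    simp [Pi.single_apply, hj]
  · intro hi; exact absurd (Finset.mem_univ i) hi

section Aug3

variable (ε : MonoidAlgebra ℚ (FreeGroup (Fin M)) →ₐ[ℚ] ℚ)
  (hε : ∀ g : FreeGroup (Fin M), ε (of ℚ (FreeGroup (Fin M)) g) = 1)

include hε in
lemma of_sub_one_mem_ker (g : FreeGroup (Fin M)) :
    of ℚ (FreeGroup (Fin M)) g - 1 ∈ LinearMap.ker ε.toLinearMap := by
  rw [LinearMap.mem_ker]
  show ε (of ℚ (FreeGroup (Fin M)) g - 1) = 0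
  rw [map_sub, map_one, hε g, sub_self]

include hε in
lemma X_mem_ker (i : Fin M) : X M i ∈ LinearMap.ker ε.toLinearMap :=
  of_sub_one_mem_ker M ε hε _

include hε in
lemma L_mem_ker (w : Fin M → ℚ) : L M w ∈ LinearMap.ker ε.toLinearMap := by
  rw [L_apply]
  exact Submodule.sum_mem _ (fun i _ => Submodule.smul_mem _ _ (X_mem_ker M ε hε i))

include hε in
lemma P_mem_ker_pow (v : Fin n → (Fin M → ℚ)) :
    P M n v ∈ (LinearMap.ker ε.toLinearMap) ^ n := by
  have := list_prod_mem_pow M (LinearMap.ker ε.toLinearMap)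
    (List.ofFn fun s => L M (v s)) (by
      intro a ha
      rw [List.mem_ofFn] at ha
      obtain ⟨s, rfl⟩ := ha
      exact L_mem_ker M ε hε _)
  rwa [List.length_ofFn] at this

/-- the quotient `Iⁿ/I^{n+1}` -/
abbrev Qn := (↥((LinearMap.ker ε.toLinearMap) ^ n) ⧸
  Submodule.comap ((LinearMap.ker ε.toLinearMap) ^ n).subtype
    ((LinearMap.ker ε.toLinearMap) ^ (n + 1)))

include hε in
set_option linter.unusedSectionVars false in
lemma mk_congr {x y : R} (hx : x ∈ (LinearMap.ker ε.toLinearMap) ^ n)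
    (hy : y ∈ (LinearMap.ker ε.toLinearMap) ^ n)
    (hxy : x - y ∈ (LinearMap.ker ε.toLinearMap) ^ (n+1)) :
    (Submodule.Quotient.mk ⟨x, hx⟩ : Qn M n ε) = Submodule.Quotient.mk ⟨y, hy⟩ := by
  rw [Submodule.Quotient.eq]
  exact hxy

/-- the multilinear map underlying `ψ` -/
noncomputable def MLmap (hε : ∀ g : FreeGroup (Fin M), ε (of ℚ (FreeGroup (Fin M)) g) = 1) :
    MultilinearMap ℚ (fun _ : Fin n => (Fin M → ℚ)) (Qn M n ε) where
  toFun v := Submodule.Quotient.mk ⟨P M n v, P_mem_ker_pow M n ε hε v⟩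
  map_update_add' {dec} v s x y := by
    have hdec : dec = instDecidableEqFin n := Subsingleton.elim _ _
    subst hdec
    rw [← Submodule.Quotient.mk_add]
    exact congrArg _ (Subtype.ext (by
      simpa using P_update_add M n v s x y))
  map_update_smul' {dec} v s c x := by
    have hdec : dec = instDecidableEqFin n := Subsingleton.elim _ _
    subst hdec
    rw [← Submodule.Quotient.mk_smul]
    exact congrArg _ (Subtype.ext (by
      simpa using P_update_smul M n v s c x))

/-- the map `H^{⊗n} → Iⁿ/I^{n+1}` -/
noncomputable def ψ : (⨂[ℚ]^n (Fin M → ℚ)) →ₗ[ℚ] Qn M n ε :=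
  PiTensorProduct.lift (MLmap M n ε hε)

lemma ψ_tprod (v : Fin n → (Fin M → ℚ)) :
    ψ M n ε hε (PiTensorProduct.tprod ℚ v)
      = Submodule.Quotient.mk ⟨P M n v, P_mem_ker_pow M n ε hε v⟩ := by
  rw [ψ, PiTensorProduct.lift.tprod]
  rfl

set_option linter.unusedSectionVars false

/-- pushforward of `Θt` to the quotient -/
noncomputable def Θq : Qn M n ε →ₗ[ℚ] ⨂[ℚ]^n (Fin M → ℚ) :=
  Submodule.liftQ _ ((Θt M n) ∘ₗ ((LinearMap.ker ε.toLinearMap) ^ n).subtype) (by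
    intro x hx
    rw [LinearMap.mem_ker, LinearMap.comp_apply]
    exact Θt_vanish M n ε hε hx)

lemma Θq_ψ (z : ⨂[ℚ]^n (Fin M → ℚ)) : Θq M n ε hε (ψ M n ε hε z) = z := by
  have : (Θq M n ε hε) ∘ₗ (ψ M n ε hε) = LinearMap.id := by
    apply PiTensorProduct.ext
    apply MultilinearMap.ext
    intro v
    simp only [LinearMap.compMultilinearMap_apply, LinearMap.comp_apply, LinearMap.id_apply]
    rw [ψ_tprod, Θq, Submodule.liftQ_apply, LinearMap.comp_apply]
    exact Θt_P M n v
  exact congrArg (fun f => f z) (congrArg DFunLike.coe this)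

lemma ψ_injective : Function.Injective (ψ M n ε hε) := by
  intro a b hab
  have := congrArg (Θq M n ε hε) hab
  rwa [Θq_ψ, Θq_ψ] at this

end Aug3

lemma pow_le_pow_submodule {A B : Submodule ℚ R} (h : A ≤ B) :
    ∀ m : ℕ, A ^ m ≤ B ^ m := by
  intro m
  induction m with
  | zero => simp
  | succ m ihm =>
    rw [pow_succ, pow_succ]
    exact mul_le_mul' ihm h

/-- abelianization coordinates -/
noncomputable def rr : FreeGroup (Fin M) →* Multiplicative (Fin M → ℚ) :=
  FreeGroup.lift (fun i => Multiplicative.ofAdd (Pi.single i (1:ℚ)))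

noncomputable def r (g : FreeGroup (Fin M)) : Fin M → ℚ := Multiplicative.toAdd (rr M g)

lemma r_one : r M 1 = 0 := by rw [r, map_one]; rfl

lemma r_mul (g h : FreeGroup (Fin M)) : r M (g * h) = r M g + r M h := by
  rw [r, map_mul]; rfl

lemma r_inv (g : FreeGroup (Fin M)) : r M g⁻¹ = - r M g := by
  rw [r, map_inv]; rfl

lemma r_gen (i : Fin M) : r M (FreeGroup.of i : FreeGroup (Fin M)) = Pi.single i 1 := by
  rw [r, rr, FreeGroup.lift_apply_of]
  rfl

section Aug4

variable (ε : MonoidAlgebra ℚ (FreeGroup (Fin M)) →ₐ[ℚ] ℚ)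
  (hε : ∀ g : FreeGroup (Fin M), ε (of ℚ (FreeGroup (Fin M)) g) = 1)

include hε in
lemma magnus (g : FreeGroup (Fin M)) :
    of ℚ (FreeGroup (Fin M)) g - 1 - L M (r M g) ∈ (LinearMap.ker ε.toLinearMap) ^ 2 := by
  induction g using FreeGroup.induction_on with
  | C1 =>
    rw [map_one, r_one, map_zero, sub_self, sub_zero]
    exact Submodule.zero_mem _
  | of i =>
    rw [r_gen, L_single, ← X_eq, sub_self]
    exact Submodule.zero_mem _
  | inv_of i hp =>
    set g : FreeGroup (Fin M) := FreeGroup.of i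
    have h1 : of ℚ (FreeGroup (Fin M)) g⁻¹ * of ℚ (FreeGroup (Fin M)) g = 1 := by
      rw [← map_mul, inv_mul_cancel, map_one]
    have hexp : (of ℚ (FreeGroup (Fin M)) g⁻¹ - 1) * (of ℚ (FreeGroup (Fin M)) g - 1)
        = of ℚ (FreeGroup (Fin M)) g⁻¹ * of ℚ (FreeGroup (Fin M)) g
          - of ℚ (FreeGroup (Fin M)) g⁻¹ - of ℚ (FreeGroup (Fin M)) g + 1 := by
      noncomm_ring
    rw [h1] at hexp
    have key : of ℚ (FreeGroup (Fin M)) g⁻¹ - 1 - L M (r M g⁻¹)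
        = -(of ℚ (FreeGroup (Fin M)) g - 1 - L M (r M g))
          - (of ℚ (FreeGroup (Fin M)) g⁻¹ - 1) * (of ℚ (FreeGroup (Fin M)) g - 1) := by
      rw [r_inv, map_neg, hexp]
      abel
    rw [key]
    apply Submodule.sub_mem _ (Submodule.neg_mem _ hp)
    rw [pow_two]
    exact Submodule.mul_mem_mul (of_sub_one_mem_ker M ε hε _) (of_sub_one_mem_ker M ε hε _)
  | mul g h hg hh =>
    have hexp : (of ℚ (FreeGroup (Fin M)) g - 1) * (of ℚ (FreeGroup (Fin M)) h - 1)
        = of ℚ (FreeGroup (Fin M)) g * of ℚ (FreeGroup (Fin M)) h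
          - of ℚ (FreeGroup (Fin M)) g - of ℚ (FreeGroup (Fin M)) h + 1 := by
      noncomm_ring
    have key : of ℚ (FreeGroup (Fin M)) (g * h) - 1 - L M (r M (g * h))
        = (of ℚ (FreeGroup (Fin M)) g - 1 - L M (r M g))
          + (of ℚ (FreeGroup (Fin M)) h - 1 - L M (r M h))
          + (of ℚ (FreeGroup (Fin M)) g - 1) * (of ℚ (FreeGroup (Fin M)) h - 1) := by
      rw [r_mul, map_add, map_mul, hexp]
      abel
    rw [key]
    apply Submodule.add_mem _ (Submodule.add_mem _ hg hh)
    rw [pow_two]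
    exact Submodule.mul_mem_mul (of_sub_one_mem_ker M ε hε _) (of_sub_one_mem_ker M ε hε _)

include hε in
set_option linter.unusedSectionVars false in
lemma prod_diff_mem : ∀ (m : ℕ) (a b : Fin m → R),
    (∀ s, a s ∈ LinearMap.ker ε.toLinearMap) →
    (∀ s, b s ∈ LinearMap.ker ε.toLinearMap) →
    (∀ s, a s - b s ∈ (LinearMap.ker ε.toLinearMap) ^ 2) →
    (List.ofFn a).prod - (List.ofFn b).prod ∈ (LinearMap.ker ε.toLinearMap) ^ (m + 1) := by
  intro m
  induction m with
  | zero =>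
    intro a b _ _ _
    simp only [List.ofFn_zero, List.prod_nil, sub_self]
    exact Submodule.zero_mem _
  | succ m ih =>
    intro a b ha hb hab
    rw [List.ofFn_succ, List.ofFn_succ, List.prod_cons, List.prod_cons]
    have key : a 0 * (List.ofFn fun s : Fin m => a s.succ).prod
          - b 0 * (List.ofFn fun s : Fin m => b s.succ).prod
        = a 0 * ((List.ofFn fun s : Fin m => a s.succ).prod
            - (List.ofFn fun s : Fin m => b s.succ).prod)
          + (a 0 - b 0) * (List.ofFn fun s : Fin m => b s.succ).prod := by
      noncomm_ring
    rw [key]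
    apply Submodule.add_mem
    · have h1 := ih (fun s => a s.succ) (fun s => b s.succ)
        (fun s => ha s.succ) (fun s => hb s.succ) (fun s => hab s.succ)
      have h2 := Submodule.mul_mem_mul (ha 0) h1
      rwa [← pow_succ'] at h2
    · have h1 : (List.ofFn fun s : Fin m => b s.succ).prod
          ∈ (LinearMap.ker ε.toLinearMap) ^ m := by
        have := list_prod_mem_pow M (LinearMap.ker ε.toLinearMap)
          (List.ofFn fun s : Fin m => b s.succ) (by
            intro c hc
            rw [List.mem_ofFn] at hc
            obtain ⟨s, rfl⟩ := hc
            exact hb s.succ)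
        rwa [List.length_ofFn] at this
      have h2 := Submodule.mul_mem_mul (hab 0) h1
      rwa [← pow_add, show 2 + m = m + 1 + 1 by omega] at h2

include hε in
lemma ψ_surjective : Function.Surjective (ψ M n ε hε) := by
  classical
  set K := LinearMap.ker ε.toLinearMap with hK
  set S : Set R := Set.range (fun g : FreeGroup (Fin M) => of ℚ (FreeGroup (Fin M)) g - 1)
    with hS
  let C := Submodule.comap ((K ^ n).subtype) (K ^ (n + 1))
  let K' : Submodule ℚ R := Submodule.map (K ^ n).subtype
    (Submodule.comap C.mkQ (LinearMap.range (ψ M n ε hε)))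
  have hSn : ∀ x ∈ S ^ n, x ∈ K' := by
    intro x hx
    rw [Set.mem_pow] at hx
    obtain ⟨f, hf⟩ := hx
    choose g hg using fun s => (f s).2
    have hcoe : (fun s : Fin n => ((f s : R))) = fun s => of ℚ (FreeGroup (Fin M)) (g s) - 1 := by
      funext s; exact (hg s).symm
    have hx : x ∈ K ^ n := by
      rw [← hf]
      have := list_prod_mem_pow M K (List.ofFn fun s => ((f s : R))) (by
        intro c hc
        rw [List.mem_ofFn] at hc
        obtain ⟨s, rfl⟩ := hc
        show ((f s : R)) ∈ K
        rw [← hg s]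
        exact of_sub_one_mem_ker M ε hε _)
      rwa [List.length_ofFn] at this
    set v : Fin n → (Fin M → ℚ) := fun s => r M (g s) with hv
    have hdiff : x - P M n v ∈ K ^ (n + 1) := by
      rw [← hf, hcoe]
      exact prod_diff_mem M ε hε n _ _
        (fun s => of_sub_one_mem_ker M ε hε _)
        (fun s => L_mem_ker M ε hε _)
        (fun s => magnus M ε hε (g s))
    refine ⟨⟨x, hx⟩, ?_, rfl⟩
    show C.mkQ ⟨x, hx⟩ ∈ LinearMap.range (ψ M n ε hε)
    have : C.mkQ ⟨x, hx⟩ = ψ M n ε hε (PiTensorProduct.tprod ℚ v) := by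
      rw [ψ_tprod, Submodule.mkQ_apply]
      exact mk_congr M n ε hε hx (P_mem_ker_pow M n ε hε v) hdiff
    rw [this]
    exact LinearMap.mem_range_self _ _
  have hpowle : K ^ n ≤ K' := by
    have h1 : K ^ n ≤ (Submodule.span ℚ S) ^ n :=
      pow_le_pow_submodule M (ker_le_span M ε hε) n
    refine le_trans h1 ?_
    rw [Submodule.span_pow]
    exact Submodule.span_le.mpr hSn
  intro z
  obtain ⟨y, rfl⟩ := Submodule.Quotient.mk_surjective _ z
  have hy : (y : R) ∈ K' := hpowle y.2
  obtain ⟨w, hw, hwy⟩ := hy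
  have : w = y := Subtype.ext hwy
  subst this
  exact hw

end Aug4
end Stmt15


/-- Magnus-type isomorphism `Iⁿ/I^{n+1} ≃ H^{⊗n}` for the
augmentation ideal `I` of the rational group algebra of a free group on `M`
generators, sending the class of `(x_{i₁}-1)⋯(x_{iₙ}-1)` to
`e_{i₁} ⊗ ⋯ ⊗ e_{iₙ}`. -/
theorem stmt_15 (M : ℕ) (n : ℕ)
    (ε : MonoidAlgebra ℚ (FreeGroup (Fin M)) →ₐ[ℚ] ℚ)
    (hε : ∀ g : FreeGroup (Fin M), ε (of ℚ (FreeGroup (Fin M)) g) = 1)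
    (I : Submodule ℚ (MonoidAlgebra ℚ (FreeGroup (Fin M))))
    (hI : I = LinearMap.ker ε.toLinearMap) :
    ∃ e : (↥(I ^ n) ⧸ Submodule.comap (I ^ n).subtype (I ^ (n + 1)))
        ≃ₗ[ℚ] (⨂[ℚ]^n (Fin M → ℚ)),
      ∀ (i : Fin n → Fin M)
        (h : (List.ofFn fun s : Fin n =>
            (of ℚ (FreeGroup (Fin M)) (FreeGroup.of (i s)) - 1)).prod ∈ I ^ n),
        e (Submodule.Quotient.mk ⟨_, h⟩)
          = PiTensorProduct.tprod ℚ (fun s => Pi.single (i s) (1 : ℚ)) := by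
  subst hI
  refine ⟨(LinearEquiv.ofBijective (Stmt15.ψ M n ε hε)
    (⟨Stmt15.ψ_injective M n ε hε, Stmt15.ψ_surjective M n ε hε⟩ : Function.Bijective _)).symm, ?_⟩
  intro i h
  rw [LinearEquiv.symm_apply_eq]
  show _ = Stmt15.ψ M n ε hε _
  rw [Stmt15.ψ_tprod]
  apply congrArg
  apply Subtype.ext
  show (List.ofFn fun s : Fin n =>
      (of ℚ (FreeGroup (Fin M)) (FreeGroup.of (i s)) - 1)).prod = Stmt15.P M n _
  unfold Stmt15.P
  congr 1
  apply congrArg List.ofFn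
  funext s
  show of ℚ (FreeGroup (Fin M)) (FreeGroup.of (i s)) - 1 = Stmt15.L M (Pi.single (i s) 1)
  exact (Stmt15.L_single M (i s)).symm
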